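/- Let G = (V,E) be a finite simple graph, a ∈ V a vertex with N_a ≠ ∅, and fix k ∈ N_a. Then there exist complex numbers c_+ and c_− of modulus 1 such that P_{X,±}^{(a)} |G⟩ = (c_±/√2) |X,±⟩^{(a)} ⊗ U_{a,X,±} |τ_k( τ_a(τ_k(G)) − a )⟩, where U_{a,X,+} = √(+iY)^{(k)} ⊗ ⨂_{b ∈ N_a∖(N_k∪{k})} Z^{(b)} and U_{a,X,−} = √(−iY)^{(k)} ⊗ ⨂_{b ∈ N_k∖(N_a∪{a})} Z^{(b)}, with N_a, N_k the neighborhoods taken in G. -/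

import Mathlib

open scoped BigOperators

noncomputable section

/-- The state space of a collection of qubits indexed by `V`:
amplitudes on computational-basis configurations `V → Bool`. -/
abbrev QState (V : Type*) := (V → Bool) → ℂ

variable {V : Type*}

/-- The inner product `⟨ψ|φ⟩`. -/
def qInner [Fintype V] [DecidableEq V] (ψ φ : QState V) : ℂ :=
  ∑ x, starRingEnd ℂ (ψ x) * φ x

/-- Pauli `X` acting on qubit `a`. -/
def pauliX [DecidableEq V] (a : V) (ψ : QState V) : QState V :=
  fun x => ψ (Function.update x a (!x a))

/-- Pauli `Z` acting on qubit `a`. -/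
def pauliZ (a : V) (ψ : QState V) : QState V :=
  fun x => (if x a then (-1 : ℂ) else 1) * ψ x

/-- Pauli `Y` acting on qubit `a`. -/
def pauliY [DecidableEq V] (a : V) (ψ : QState V) : QState V :=
  fun x => (if x a then Complex.I else -Complex.I) * ψ (Function.update x a (!x a))

/-- The tensor product `⨂_{b ∈ s} Z^{(b)}` of Pauli `Z` over the qubits in `s`. -/
def pauliZProd (s : Finset V) (ψ : QState V) : QState V :=
  fun x => (∏ b ∈ s, if x b then (-1 : ℂ) else 1) * ψ x

/-- A tensor product over the qubits in `s` of the diagonal single-qubit gate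
`diag (f false, f true)`. -/
def diagProd (s : Finset V) (f : Bool → ℂ) (ψ : QState V) : QState V :=
  fun x => (∏ b ∈ s, f (x b)) * ψ x

/-- The sign `(-1)^{x u · x v}` contributed by an edge `{u, v}`. -/
def edgeSign (x : V → Bool) : Sym2 V → ℂ :=
  Sym2.lift ⟨fun a b => if x a && x b then (-1 : ℂ) else 1,
    fun a b => by simp [Bool.and_comm]⟩

/-- The graph state `|G⟩ = (∏_{{u,v}∈E} CZ^{(uv)}) ⨂_v |+⟩^{(v)}` of a finite simple graph,
written out in amplitudes. -/
def graphState [Fintype V] [DecidableEq V] (G : SimpleGraph V) [DecidableRel G.Adj] :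
    QState V :=
  fun x => ((Real.sqrt 2 : ℝ) : ℂ)⁻¹ ^ (Fintype.card V) * ∏ e ∈ G.edgeFinset, edgeSign x e

/-- Local complementation `τ_a(G)` of a graph `G` at the vertex `a`: complement the
adjacency among the neighbors of `a`, leaving all other adjacencies unchanged. -/
def localComp (G : SimpleGraph V) (a : V) : SimpleGraph V where
  Adj u v :=
    (G.Adj a u ∧ G.Adj a v ∧ u ≠ v ∧ ¬ G.Adj u v) ∨
      ((¬ (G.Adj a u ∧ G.Adj a v)) ∧ G.Adj u v)
  symm := by
    refine ⟨?_⟩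
    intro u v h
    rcases h with ⟨h1, h2, h3, h4⟩ | ⟨h1, h2⟩
    · exact Or.inl ⟨h2, h1, h3.symm, fun h => h4 (G.adj_symm h)⟩
    · exact Or.inr ⟨fun h => h1 ⟨h.2, h.1⟩, G.adj_symm h2⟩
  loopless := by
    refine ⟨?_⟩
    intro u h
    rcases h with ⟨_, _, h3, _⟩ | ⟨_, h2⟩
    · exact h3 rfl
    · exact G.irrefl h2

instance [DecidableEq V] (G : SimpleGraph V) [DecidableRel G.Adj] (a : V) :
    DecidableRel (localComp G a).Adj := fun u v =>
  inferInstanceAs (Decidable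
    ((G.Adj a u ∧ G.Adj a v ∧ u ≠ v ∧ ¬ G.Adj u v) ∨
      ((¬ (G.Adj a u ∧ G.Adj a v)) ∧ G.Adj u v)))

/-- The induced subgraph of `G` on the vertices satisfying `P`. -/
def inducedSub (G : SimpleGraph V) (P : V → Prop) : SimpleGraph {v : V // P v} :=
  SimpleGraph.comap Subtype.val G

instance (G : SimpleGraph V) [DecidableRel G.Adj] (P : V → Prop) :
    DecidableRel (inducedSub G P).Adj := fun u v =>
  inferInstanceAs (Decidable (G.Adj u.1 v.1))

/-- The eigenvectors `|Z,+⟩ = |0⟩`, `|Z,-⟩ = |1⟩` of Pauli `Z`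
(`s = false` the `+1`-eigenvector, `s = true` the `-1`-eigenvector). -/
def zVec (s : Bool) : Bool → ℂ := fun c => if c = s then 1 else 0

/-- The eigenvectors `|X,±⟩ = (|0⟩ ± |1⟩)/√2` of Pauli `X`
(`s = false` the `+1`-eigenvector, `s = true` the `-1`-eigenvector). -/
def xVec (s : Bool) : Bool → ℂ :=
  fun c => ((Real.sqrt 2 : ℝ) : ℂ)⁻¹ * (if c && s then -1 else 1)

/-- The eigenvectors `|Y,±⟩ = (|0⟩ ± i|1⟩)/√2` of Pauli `Y`
(`s = false` the `+1`-eigenvector, `s = true` the `-1`-eigenvector). -/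
def yVec (s : Bool) : Bool → ℂ :=
  fun c => ((Real.sqrt 2 : ℝ) : ℂ)⁻¹ *
    (if c then (if s then -Complex.I else Complex.I) else 1)

/-- The rank-one projector `|v⟩⟨v|` on qubit `a` (identity elsewhere),
for a single-qubit vector `v`. -/
def projDir [DecidableEq V] (a : V) (v : Bool → ℂ) (ψ : QState V) : QState V :=
  fun x => v (x a) *
    (starRingEnd ℂ (v false) * ψ (Function.update x a false) +
      starRingEnd ℂ (v true) * ψ (Function.update x a true))

/-- The tensor product `|v⟩^{(a)} ⊗ |φ⟩` of a single-qubit state on qubit `a` with a state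
on the remaining qubits. -/
def tensorQubit [DecidableEq V] (a : V) (v : Bool → ℂ) (φ : QState {u : V // u ≠ a}) :
    QState V :=
  fun x => v (x a) * φ (fun u => x u.1)

/-- Apply a single-qubit gate with matrix entries `m r c = ⟨r|M|c⟩` on qubit `a`. -/
def applyGate [DecidableEq V] (a : V) (m : Bool → Bool → ℂ) (ψ : QState V) : QState V :=
  fun x => m (x a) false * ψ (Function.update x a false) +
    m (x a) true * ψ (Function.update x a true)

/-- The square roots `√(±iY) = (I ± iY)/√2`
(`s = false` for `√(+iY)`, `s = true` for `√(-iY)`). -/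
def sqrtiY (s : Bool) : Bool → Bool → ℂ :=
  fun r c => ((Real.sqrt 2 : ℝ) : ℂ)⁻¹ *
    (if s then (if r = false ∧ c = true then -1 else 1)
     else (if r = true ∧ c = false then -1 else 1))

/-- The Hadamard gate. -/
def hadamard : Bool → Bool → ℂ :=
  fun r c => ((Real.sqrt 2 : ℝ) : ℂ)⁻¹ * (if r && c then -1 else 1)

/-- Apply a tensor product of single-qubit gates, one on each qubit. -/
def applyLocal [Fintype V] [DecidableEq V] (u : V → Bool → Bool → ℂ) (ψ : QState V) :
    QState V :=
  fun x => ∑ y : V → Bool, (∏ v, u v (x v) (y v)) * ψ y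

/-- `2×2` matrix multiplication (matrices as `Bool → Bool → ℂ`). -/
def matMul2 (a b : Bool → Bool → ℂ) : Bool → Bool → ℂ :=
  fun r c => ∑ k : Bool, a r k * b k c

/-- Adjoint of a `2×2` matrix. -/
def matAdj2 (a : Bool → Bool → ℂ) : Bool → Bool → ℂ := fun r c => starRingEnd ℂ (a c r)

def idMat : Bool → Bool → ℂ := fun r c => if r = c then 1 else 0
def xMat : Bool → Bool → ℂ := fun r c => if r = c then 0 else 1
def yMat : Bool → Bool → ℂ := fun r c => if r = c then 0 else if r then Complex.I else -Complex.I
def zMat : Bool → Bool → ℂ := fun r c => if r = c then (if r then -1 else 1) else 0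

/-- A `2×2` matrix is unitary. -/
def IsUnitary2 (u : Bool → Bool → ℂ) : Prop := matMul2 (matAdj2 u) u = idMat

/-- A single-qubit Clifford unitary: a unitary conjugating `X` and `Z` into
`i^k·P` with `P` a Pauli matrix. -/
def IsClifford1 (u : Bool → Bool → ℂ) : Prop :=
  IsUnitary2 u ∧
    (∃ (k : ℕ) (P : Bool → Bool → ℂ), P ∈ ({idMat, xMat, yMat, zMat} : Set _) ∧
      matMul2 (matMul2 u xMat) (matAdj2 u) = Complex.I ^ k • P) ∧
    (∃ (k : ℕ) (P : Bool → Bool → ℂ), P ∈ ({idMat, xMat, yMat, zMat} : Set _) ∧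
      matMul2 (matMul2 u zMat) (matAdj2 u) = Complex.I ^ k • P)

/-- The action of the `n`-qubit Pauli operator `c · ⨂_v X^{xv v} Z^{zv v}`. -/
def pauliAction [Fintype V] (c : ℂ) (xv zv : V → Bool) (ψ : QState V) : QState V :=
  fun s => c * (∏ v, if zv v && (xor (s v) (xv v)) then (-1 : ℂ) else 1) *
    ψ (fun v => xor (s v) (xv v))

/-- The outer product `|ψ⟩⟨φ|` as a matrix on configurations. -/
def outer (ψ φ : QState V) : (V → Bool) → (V → Bool) → ℂ :=
  fun x y => ψ x * starRingEnd ℂ (φ y)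

open Classical in
/-- Partial trace keeping the qubits that satisfy `P` (tracing out the others). -/
def ptraceKeep [Fintype V] [DecidableEq V] (P : V → Prop)
    (ρ : (V → Bool) → (V → Bool) → ℂ) :
    ({v : V // P v} → Bool) → ({v : V // P v} → Bool) → ℂ :=
  fun x y => ∑ z : {v : V // ¬ P v} → Bool,
    ρ (fun w => if h : P w then x ⟨w, h⟩ else z ⟨w, h⟩)
      (fun w => if h : P w then y ⟨w, h⟩ else z ⟨w, h⟩)

open Classical in
/-- Apply a product of single-qubit bras `⟨bra v|` to each qubit `v` satisfying `P`,
leaving a state on the remaining qubits. -/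
def applyBras [Fintype V] [DecidableEq V] (P : V → Prop) (bra : V → Bool → ℂ)
    (ψ : QState V) : QState {v : V // ¬ P v} :=
  fun x => ∑ z : {v : V // P v} → Bool,
    (∏ v : {v : V // P v}, bra v.1 (z v)) *
      ψ (fun w => if h : P w then z ⟨w, h⟩ else x ⟨w, h⟩)

/-- A density operator: hermitian, trace one, positive semidefinite. -/
def IsDensityOp {α : Type*} [Fintype α] [DecidableEq α]
    (ρ : (α → Bool) → (α → Bool) → ℂ) : Prop :=
  (∀ x y, starRingEnd ℂ (ρ y x) = ρ x y) ∧ (∑ x, ρ x x = 1) ∧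
    ∀ ψ : (α → Bool) → ℂ, ∃ r : ℝ, 0 ≤ r ∧
      (∑ x, ∑ y, starRingEnd ℂ (ψ x) * ρ x y * ψ y) = (r : ℂ)

open Classical in
/-- Separability of an operator on the qubits indexed by `α` with respect to the
bipartition `(A, Aᶜ)`: a finite convex combination of tensor products of density
operators. -/
def SeparableWrt {α : Type*} [Fintype α] [DecidableEq α] (A : Set α)
    (ρ : (α → Bool) → (α → Bool) → ℂ) : Prop :=
  ∃ (k : ℕ) (p : Fin k → ℝ)
    (σ : Fin k → ({a : α // a ∈ A} → Bool) → ({a : α // a ∈ A} → Bool) → ℂ)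
    (τ : Fin k → ({a : α // a ∉ A} → Bool) → ({a : α // a ∉ A} → Bool) → ℂ),
    (∀ i, 0 ≤ p i) ∧ (∑ i, p i = 1) ∧
    (∀ i, IsDensityOp (σ i)) ∧ (∀ i, IsDensityOp (τ i)) ∧
    ∀ x y, ρ x y = ∑ i, (p i : ℂ) *
      (σ i (fun a => x a.1) (fun a => y a.1) * τ i (fun a => x a.1) (fun a => y a.1))


instance {α : Type*} [DecidableEq α] (r : α → α → Prop) [DecidableRel r] :
    DecidableRel (SimpleGraph.fromRel r).Adj := fun a b =>
  inferInstanceAs (Decidable (a ≠ b ∧ (r a b ∨ r b a)))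

/-- The line graph on `{1, …, n}` (as `Fin n`) with edges between consecutive vertices. -/
def lineGraph (n : ℕ) : SimpleGraph (Fin n) :=
  SimpleGraph.fromRel (fun i j => (i : ℕ) + 1 = (j : ℕ))

instance (n : ℕ) : DecidableRel (lineGraph n).Adj := fun a b =>
  inferInstanceAs (Decidable (a ≠ b ∧ ((a : ℕ) + 1 = (b : ℕ) ∨ (b : ℕ) + 1 = (a : ℕ))))

/-- The extension `I_R ⊗ s` of an operator `s` on `n` qubits by the identity on an extra
reference qubit labelled `0`. -/
def liftOp {n : ℕ} (s : QState (Fin n) → QState (Fin n)) (ψ : QState (Fin (n + 1))) :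
    QState (Fin (n + 1)) :=
  fun x => s (fun y => ψ (Fin.cons (x 0) y)) (fun k => x k.succ)

end

noncomputable section Aux

lemma choose_add_two (m n : ℕ) : (m+n).choose 2 = m.choose 2 + n.choose 2 + m*n := by
  induction n with
  | zero => simp
  | succ k ih =>
    have h1 : (m+(k+1)) = (m+k)+1 := by ring
    rw [h1, Nat.choose_succ_succ (m+k) 1, ih, Nat.choose_succ_succ k 1]
    simp [Nat.choose_one_right]
    ring

variable {V : Type*}

lemma edgeSign_mk (x : V → Bool) (u v : V) :
    edgeSign x s(u,v) = if x u && x v then (-1:ℂ) else 1 := rfl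

lemma edgeSign_mul_self (x : V → Bool) (e : Sym2 V) : edgeSign x e * edgeSign x e = 1 := by
  induction e using Sym2.ind with
  | _ u v => rw [edgeSign_mk]; split <;> norm_num

/-- product of edge signs over a finset of pairs -/
def esP (E : Finset (Sym2 V)) (x : V → Bool) : ℂ := ∏ e ∈ E, edgeSign x e

lemma esP_mul_self (E : Finset (Sym2 V)) (x : V → Bool) : esP E x * esP E x = 1 := by
  rw [esP, ← Finset.prod_mul_distrib]
  exact Finset.prod_eq_one fun e _ => edgeSign_mul_self x e

variable [DecidableEq V]

lemma esP_symmDiff (E F : Finset (Sym2 V)) (x : V → Bool) :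
    esP (symmDiff E F) x = esP E x * esP F x := by
  have h1 : E ∪ F = (symmDiff E F) ∪ (E ∩ F) := by
    ext e; simp [Finset.mem_symmDiff]; tauto
  have h2 : Disjoint (symmDiff E F) (E ∩ F) := by
    rw [Finset.disjoint_left]
    intro e he hee
    simp [Finset.mem_symmDiff] at he
    simp at hee
    tauto
  have h3 : esP E x * esP F x = esP (E ∪ F) x * esP (E ∩ F) x := by
    rw [esP, esP, esP, esP, Finset.prod_union_inter]
  have h4 : esP (E ∪ F) x = esP (symmDiff E F) x * esP (E ∩ F) x := by
    rw [esP, h1, Finset.prod_union h2]; rfl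
  rw [h3, h4, mul_assoc, esP_mul_self, mul_one]

def chi (S : Finset V) (x : V → Bool) : ℂ := ∏ b ∈ S, if x b then (-1:ℂ) else 1

lemma chi_eq_pow (S : Finset V) (x : V → Bool) :
    chi S x = (-1:ℂ)^((S.filter (fun v => x v = true)).card) := by
  rw [chi, ← Finset.prod_filter_mul_prod_filter_not S (fun b => x b = true)]
  rw [Finset.prod_congr rfl (fun b hb => if_pos (Finset.mem_filter.mp hb).2),
      Finset.prod_congr rfl (fun b hb => if_neg (by simpa using (Finset.mem_filter.mp hb).2))]
  simp

lemma chi_congr (S : Finset V) (x y : V → Bool) (h : ∀ b ∈ S, x b = y b) :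
    chi S x = chi S y := Finset.prod_congr rfl fun b hb => by rw [h b hb]

lemma filter_update_notMem (S : Finset V) (x : V → Bool) (k : V) (t : Bool) (hk : k ∉ S) :
    S.filter (fun v => Function.update x k t v = true) = S.filter (fun v => x v = true) := by
  apply Finset.filter_congr
  intro v hv
  rw [Function.update_of_ne (fun (hh : v = k) => hk (hh ▸ hv))]

lemma filter_update_mem (S : Finset V) (x : V → Bool) (k : V) (hk : k ∈ S) (hxk : x k = false) :
    S.filter (fun v => Function.update x k true v = true) =
      insert k (S.filter (fun v => x v = true)) := by
  ext v
  by_cases hv : v = k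
  · subst hv; simp [hk]
  · simp [Function.update_of_ne hv, hv]

lemma chi_update_true (S : Finset V) (x : V → Bool) (k : V) (hxk : x k = false) :
    chi S (Function.update x k true) = (if k ∈ S then (-1:ℂ) else 1) * chi S x := by
  by_cases hk : k ∈ S
  · rw [if_pos hk, chi, chi, ← Finset.mul_prod_erase S _ hk, ← Finset.mul_prod_erase S _ hk]
    rw [Function.update_self, hxk]
    simp only [if_true, if_false, Bool.false_eq_true]
    rw [one_mul]
    congr 1
    exact Finset.prod_congr rfl fun b hb =>
      by rw [Function.update_of_ne (Finset.ne_of_mem_erase hb)]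
  · rw [if_neg hk, one_mul]
    exact chi_congr _ _ _ fun b hb => Function.update_of_ne (fun (hh : b = k) => hk (hh ▸ hb)) _ _

lemma edgeSign_update_of_not_mem (x : V → Bool) (v : V) (t : Bool) (e : Sym2 V) (he : v ∉ e) :
    edgeSign (Function.update x v t) e = edgeSign x e := by
  induction e using Sym2.ind with
  | _ u w =>
    rw [Sym2.mem_iff] at he
    push_neg at he
    rw [edgeSign_mk, edgeSign_mk,
      Function.update_of_ne (fun h => he.1 h.symm),
      Function.update_of_ne (fun h => he.2 h.symm)]

lemma edgeFinset_filter_mem [Fintype V] (Γ : SimpleGraph V) [DecidableRel Γ.Adj] (v : V) :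
    Γ.edgeFinset.filter (fun e => v ∈ e) = (Γ.neighborFinset v).image (fun b => s(v,b)) := by
  ext e
  induction e using Sym2.ind with
  | _ u w =>
    simp only [Finset.mem_filter, SimpleGraph.mem_edgeFinset, SimpleGraph.mem_edgeSet,
      Sym2.mem_iff, Finset.mem_image, SimpleGraph.mem_neighborFinset]
    constructor
    · rintro ⟨hadj, (rfl | rfl)⟩
      · exact ⟨w, hadj, rfl⟩
      · exact ⟨u, hadj.symm, Sym2.eq_swap⟩
    · rintro ⟨b, hb, heq⟩
      rcases Sym2.eq_iff.mp heq with ⟨rfl, rfl⟩ | ⟨rfl, rfl⟩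
      · exact ⟨hb, Or.inl rfl⟩
      · exact ⟨hb.symm, Or.inr rfl⟩

lemma esP_flip [Fintype V] (Γ : SimpleGraph V) [DecidableRel Γ.Adj] (v : V) (x : V → Bool)
    (hx : x v = false) :
    esP Γ.edgeFinset (Function.update x v true) =
      chi (Γ.neighborFinset v) x * esP Γ.edgeFinset x := by
  have hinj : ∀ b₁ ∈ Γ.neighborFinset v, ∀ b₂ ∈ Γ.neighborFinset v,
      s(v,b₁) = s(v,b₂) → b₁ = b₂ := fun b₁ _ b₂ _ h => Sym2.congr_right.mp h
  have hsplit : ∀ w : V → Bool, esP Γ.edgeFinset w =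
      (∏ e ∈ Γ.edgeFinset.filter (fun e => v ∈ e), edgeSign w e) *
      ∏ e ∈ Γ.edgeFinset.filter (fun e => ¬ v ∈ e), edgeSign w e :=
    fun w => (Finset.prod_filter_mul_prod_filter_not _ _ _).symm
  rw [hsplit, hsplit x, edgeFinset_filter_mem, Finset.prod_image hinj, Finset.prod_image hinj]
  have h1 : ∏ b ∈ Γ.neighborFinset v, edgeSign (Function.update x v true) s(v,b) =
      chi (Γ.neighborFinset v) x := by
    apply Finset.prod_congr rfl
    intro b hb
    have hbv : b ≠ v := (SimpleGraph.ne_of_adj Γ (SimpleGraph.mem_neighborFinset Γ v b |>.mp hb)).symm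
    rw [edgeSign_mk, Function.update_self, Function.update_of_ne hbv]
    simp
  have h2 : ∏ b ∈ Γ.neighborFinset v, edgeSign x s(v,b) = 1 := by
    apply Finset.prod_eq_one
    intro b _
    rw [edgeSign_mk, hx]
    simp
  have h3 : ∏ e ∈ Γ.edgeFinset.filter (fun e => ¬ v ∈ e), edgeSign (Function.update x v true) e =
      ∏ e ∈ Γ.edgeFinset.filter (fun e => ¬ v ∈ e), edgeSign x e := by
    apply Finset.prod_congr rfl
    intro e he
    exact edgeSign_update_of_not_mem x v true e (Finset.mem_filter.mp he).2
  rw [h1, h2, h3, one_mul]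

def pairsF (S : Finset V) : Finset (Sym2 V) :=
  ((S ×ˢ S).filter (fun p => p.1 ≠ p.2)).image (fun p => s(p.1, p.2))

lemma mem_pairsF (S : Finset V) (u w : V) :
    s(u,w) ∈ pairsF S ↔ u ∈ S ∧ w ∈ S ∧ u ≠ w := by
  simp only [pairsF, Finset.mem_image, Finset.mem_filter, Finset.mem_product]
  constructor
  · rintro ⟨⟨c, d⟩, ⟨⟨hc, hd⟩, hne⟩, heq⟩
    rcases Sym2.eq_iff.mp heq with ⟨rfl, rfl⟩ | ⟨rfl, rfl⟩
    · exact ⟨hc, hd, hne⟩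
    · exact ⟨hd, hc, fun h => hne h.symm⟩
  · rintro ⟨hu, hw, hne⟩
    exact ⟨(u, w), ⟨⟨hu, hw⟩, hne⟩, rfl⟩

lemma mem_of_mem_pairsF (S : Finset V) (e : Sym2 V) (he : e ∈ pairsF S) :
    ∀ u ∈ e, u ∈ S := by
  induction e using Sym2.ind with
  | _ u w =>
    rw [mem_pairsF] at he
    intro c hc
    rcases Sym2.mem_iff.mp hc with rfl | rfl
    · exact he.1
    · exact he.2.1

lemma localComp_edgeFinset [Fintype V] (Γ : SimpleGraph V) [DecidableRel Γ.Adj] (v : V) :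
    (localComp Γ v).edgeFinset = symmDiff Γ.edgeFinset (pairsF (Γ.neighborFinset v)) := by
  ext e
  induction e using Sym2.ind with
  | _ u w =>
    rw [Finset.mem_symmDiff, mem_pairsF]
    simp only [SimpleGraph.mem_edgeFinset, SimpleGraph.mem_edgeSet,
      SimpleGraph.mem_neighborFinset]
    show (Γ.Adj v u ∧ Γ.Adj v w ∧ u ≠ w ∧ ¬ Γ.Adj u w) ∨ ((¬ (Γ.Adj v u ∧ Γ.Adj v w)) ∧ Γ.Adj u w) ↔ _
    have h1 : Γ.Adj u w → u ≠ w := SimpleGraph.Adj.ne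
    tauto

lemma pairsF_insert (w : V) (S : Finset V) (hw : w ∉ S) :
    pairsF (insert w S) = pairsF S ∪ S.image (fun b => s(w,b)) := by
  ext e
  induction e using Sym2.ind with
  | _ u v =>
    simp only [mem_pairsF, Finset.mem_insert, Finset.mem_union, Finset.mem_image]
    constructor
    · rintro ⟨hu, hv, hne⟩
      rcases hu with rfl | hu
      · rcases hv with rfl | hv
        · exact absurd rfl hne
        · exact Or.inr ⟨v, hv, rfl⟩
      · rcases hv with rfl | hv
        · exact Or.inr ⟨u, hu, Sym2.eq_swap⟩
        · exact Or.inl ⟨hu, hv, hne⟩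
    · rintro (⟨hu, hv, hne⟩ | ⟨b, hb, heq⟩)
      · exact ⟨Or.inr hu, Or.inr hv, hne⟩
      · rcases Sym2.eq_iff.mp heq with ⟨rfl, rfl⟩ | ⟨rfl, rfl⟩
        · exact ⟨Or.inl rfl, Or.inr hb, fun h => hw (by rw [h]; exact hb)⟩
        · exact ⟨Or.inr hb, Or.inl rfl, fun h => hw (by rw [← h]; exact hb)⟩

lemma esP_pairsF (S : Finset V) (x : V → Bool) :
    esP (pairsF S) x = (-1:ℂ)^(((S.filter (fun v => x v = true)).card).choose 2) := by
  induction S using Finset.induction_on with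
  | empty => simp [pairsF, esP]
  | @insert w S hw ih =>
    have hdisj : Disjoint (pairsF S) (S.image (fun b => s(w,b))) := by
      rw [Finset.disjoint_left]
      intro e he hee
      rcases Finset.mem_image.mp hee with ⟨b, _, rfl⟩
      exact hw (mem_of_mem_pairsF S _ he w (Sym2.mem_mk_left w b))
    have hinj : ∀ b₁ ∈ S, ∀ b₂ ∈ S, s(w,b₁) = s(w,b₂) → b₁ = b₂ :=
      fun b₁ _ b₂ _ h => Sym2.congr_right.mp h
    rw [pairsF_insert w S hw, esP, Finset.prod_union hdisj, ← esP, ih, Finset.prod_image hinj]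
    by_cases hxw : x w = true
    · have himg : ∏ b ∈ S, edgeSign x s(w,b) = chi S x := by
        apply Finset.prod_congr rfl
        intro b _
        rw [edgeSign_mk, hxw]
        simp
      rw [himg, Finset.filter_insert, if_pos hxw,
        Finset.card_insert_of_notMem (fun h => hw (Finset.mem_filter.mp h).1)]
      rw [chi_eq_pow]
      set c := (S.filter (fun v => x v = true)).card
      rw [show c + 1 = 1 + c by ring, choose_add_two 1 c]
      norm_num [pow_add]
    · have himg : ∏ b ∈ S, edgeSign x s(w,b) = 1 := by
        apply Finset.prod_eq_one
        intro b _
        rw [edgeSign_mk]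
        simp [hxw]
      rw [himg, Finset.filter_insert, if_neg hxw, mul_one]


lemma edgeSign_eq_one_of_mem_false (x : V → Bool) (e : Sym2 V) (u : V) (hu : u ∈ e)
    (hx : x u = false) : edgeSign x e = 1 := by
  induction e using Sym2.ind with
  | _ c d =>
    rcases Sym2.mem_iff.mp hu with rfl | rfl <;> rw [edgeSign_mk, hx] <;> simp

lemma esP_induced [Fintype V] (Γ : SimpleGraph V) [DecidableRel Γ.Adj] (a : V)
    (y : {v : V // v ≠ a} → Bool) (x : V → Bool) (hxa : x a = false)
    (hxy : ∀ u : {v : V // v ≠ a}, x u.1 = y u) :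
    esP (inducedSub Γ (· ≠ a)).edgeFinset y = esP Γ.edgeFinset x := by
  simp only [esP]
  rw [← Finset.prod_filter_mul_prod_filter_not Γ.edgeFinset (fun e => a ∈ e)]
  have h2 : ∏ e ∈ Γ.edgeFinset.filter (fun e => a ∈ e), edgeSign x e = 1 :=
    Finset.prod_eq_one fun e he =>
      edgeSign_eq_one_of_mem_false x e a (Finset.mem_filter.mp he).2 hxa
  rw [h2, one_mul]
  apply Finset.prod_bij (fun (e : Sym2 {v : V // v ≠ a}) _ => Sym2.map Subtype.val e)
  · intro e he
    induction e using Sym2.ind with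
    | _ u w =>
      rw [Sym2.map_pair_eq, Finset.mem_filter, SimpleGraph.mem_edgeFinset,
        SimpleGraph.mem_edgeSet]
      have hadj : Γ.Adj u.1 w.1 := by
        rw [SimpleGraph.mem_edgeFinset, SimpleGraph.mem_edgeSet] at he
        exact he
      refine ⟨hadj, ?_⟩
      intro hmem
      rcases Sym2.mem_iff.mp hmem with h | h
      · exact u.2 h.symm
      · exact w.2 h.symm
  · intro e₁ _ e₂ _ h
    exact Sym2.map.injective Subtype.val_injective h
  · intro e he
    rw [Finset.mem_filter, SimpleGraph.mem_edgeFinset] at he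
    induction e using Sym2.ind with
    | _ u w =>
      have hadj : Γ.Adj u w := (SimpleGraph.mem_edgeSet Γ).mp he.1
      have hu : u ≠ a := fun h => he.2 (h ▸ Sym2.mem_mk_left u w)
      have hw : w ≠ a := fun h => he.2 (h ▸ Sym2.mem_mk_right u w)
      refine ⟨s(⟨u, hu⟩, ⟨w, hw⟩), ?_, ?_⟩
      · rw [SimpleGraph.mem_edgeFinset, SimpleGraph.mem_edgeSet]
        exact hadj
      · rw [Sym2.map_pair_eq]
  · intro e he
    induction e using Sym2.ind with
    | _ u w =>
      rw [Sym2.map_pair_eq, edgeSign_mk, edgeSign_mk, hxy u, hxy w]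

lemma filter_image_val [Fintype V] (a : V) (T : Finset {v : V // v ≠ a})
    (w : {v : V // v ≠ a} → Bool) (x : V → Bool) (hxy : ∀ u : {v : V // v ≠ a}, x u.1 = w u) :
    (T.image Subtype.val).filter (fun v => x v = true) =
      (T.filter (fun u => w u = true)).image Subtype.val := by
  ext v
  simp only [Finset.mem_filter, Finset.mem_image]
  constructor
  · rintro ⟨⟨u, hu, rfl⟩, hx⟩
    exact ⟨u, ⟨hu, by rw [← hxy u]; exact hx⟩, rfl⟩
  · rintro ⟨u, ⟨hu, hw⟩, rfl⟩
    exact ⟨⟨u, hu, rfl⟩, by rw [hxy u]; exact hw⟩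

lemma card_filter_image_val [Fintype V] (a : V) (T : Finset {v : V // v ≠ a})
    (w : {v : V // v ≠ a} → Bool) (x : V → Bool) (hxy : ∀ u : {v : V // v ≠ a}, x u.1 = w u) :
    ((T.image Subtype.val).filter (fun v => x v = true)).card =
      (T.filter (fun u => w u = true)).card := by
  rw [filter_image_val a T w x hxy, Finset.card_image_of_injective _ Subtype.val_injective]

lemma chi_image_val [Fintype V] (a : V) (T : Finset {v : V // v ≠ a})
    (w : {v : V // v ≠ a} → Bool) (x : V → Bool) (hxy : ∀ u : {v : V // v ≠ a}, x u.1 = w u) :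
    chi (T.image Subtype.val) x = chi T w := by
  rw [chi_eq_pow, chi_eq_pow, card_filter_image_val a T w x hxy]


lemma localComp_adj (Γ : SimpleGraph V) (v u w : V) :
    (localComp Γ v).Adj u w ↔
      ((Γ.Adj v u ∧ Γ.Adj v w ∧ u ≠ w ∧ ¬ Γ.Adj u w) ∨
        ((¬ (Γ.Adj v u ∧ Γ.Adj v w)) ∧ Γ.Adj u w)) := Iff.rfl

lemma nbr_G1_a [Fintype V] (G : SimpleGraph V) [DecidableRel G.Adj] (a k : V)
    (hak : G.Adj a k) :
    (localComp G k).neighborFinset a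
      = symmDiff (G.neighborFinset a) ((G.neighborFinset k).erase a) := by
  ext b
  simp only [SimpleGraph.mem_neighborFinset, Finset.mem_symmDiff, Finset.mem_erase,
    localComp_adj]
  have h1 : G.Adj k a := hak.symm
  have h2 : G.Adj a b → a ≠ b := fun h => h.ne
  have h4 : (a ≠ b) ↔ (b ≠ a) := ne_comm
  tauto

lemma adj_G2_kb (G : SimpleGraph V) (a k b : V) (hak : G.Adj a k) (hb : b ≠ a) :
    (localComp (localComp G k) a).Adj k b ↔ (G.Adj a b ∧ b ≠ k) := by
  by_cases hbk : b = k
  · subst hbk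
    simp only [localComp_adj]
    have h0 : ¬ G.Adj b b := G.irrefl
    tauto
  · simp only [localComp_adj]
    have hkk : ¬ G.Adj k k := G.irrefl
    have haa : ¬ G.Adj a a := G.irrefl
    have hka : G.Adj k a := hak.symm
    have hak' : G.Adj a k := hak
    have hne : a ≠ k := hak.ne
    have hne2 : k ≠ a := hak.ne'
    have hne3 : k ≠ b := fun h => hbk h.symm
    have hne4 : b ≠ a := hb
    tauto

lemma image_N2 [Fintype V] (G : SimpleGraph V) [DecidableRel G.Adj] (a k : V)
    (hak : G.Adj a k) :
    (((inducedSub (localComp (localComp G k) a) (· ≠ a)).neighborFinset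
        ⟨k, hak.ne'⟩).image Subtype.val) = (G.neighborFinset a).erase k := by
  ext v
  simp only [Finset.mem_image, SimpleGraph.mem_neighborFinset, Finset.mem_erase]
  constructor
  · rintro ⟨u, hu, rfl⟩
    have hadj : (localComp (localComp G k) a).Adj k u.1 := hu
    have := (adj_G2_kb G a k u.1 hak u.2).mp hadj
    exact ⟨this.2, this.1⟩
  · rintro ⟨hvk, hav⟩
    have hva : v ≠ a := hav.ne'
    refine ⟨⟨v, hva⟩, ?_, rfl⟩
    show (localComp (localComp G k) a).Adj k v
    exact (adj_G2_kb G a k v hak hva).mpr ⟨hav, hvk⟩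

lemma image_Sp [Fintype V] (G : SimpleGraph V) [DecidableRel G.Adj] (a k : V)
    (hak : G.Adj a k) :
    ((Finset.univ.filter (fun b : {v : V // v ≠ a} =>
        G.Adj a b.1 ∧ ¬ G.Adj k b.1 ∧ b.1 ≠ k)).image Subtype.val)
      = ((G.neighborFinset a).erase k) \ ((G.neighborFinset k).erase a) := by
  ext v
  simp only [Finset.mem_image, Finset.mem_filter, Finset.mem_univ, true_and,
    Finset.mem_sdiff, Finset.mem_erase, SimpleGraph.mem_neighborFinset]
  constructor
  · rintro ⟨u, ⟨h1, h2, h3⟩, rfl⟩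
    exact ⟨⟨h3, h1⟩, fun hh => h2 hh.2⟩
  · rintro ⟨⟨h1, h2⟩, h3⟩
    refine ⟨⟨v, h2.ne'⟩, ⟨h2, ?_, h1⟩, rfl⟩
    intro hkv
    exact h3 ⟨h2.ne', hkv⟩

lemma image_Sm [Fintype V] (G : SimpleGraph V) [DecidableRel G.Adj] (a k : V)
    (hak : G.Adj a k) :
    ((Finset.univ.filter (fun b : {v : V // v ≠ a} =>
        G.Adj k b.1 ∧ ¬ G.Adj a b.1)).image Subtype.val)
      = ((G.neighborFinset k).erase a) \ ((G.neighborFinset a).erase k) := by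
  ext v
  simp only [Finset.mem_image, Finset.mem_filter, Finset.mem_univ, true_and,
    Finset.mem_sdiff, Finset.mem_erase, SimpleGraph.mem_neighborFinset]
  constructor
  · rintro ⟨u, ⟨h1, h2⟩, rfl⟩
    exact ⟨⟨u.2, h1⟩, fun hh => h2 hh.2⟩
  · rintro ⟨⟨h1, h2⟩, h3⟩
    refine ⟨⟨v, h1⟩, ⟨h2, ?_⟩, rfl⟩
    intro hav
    refine h3 ⟨?_, hav⟩
    intro hvk
    subst hvk
    exact G.irrefl h2

lemma neg_one_pow_par (n : ℕ) : ((-1:ℂ))^n = if n % 2 = 0 then 1 else -1 := by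
  conv_lhs => rw [← Nat.div_add_mod n 2]
  rcases Nat.mod_two_eq_zero_or_one n with h | h <;> rw [h] <;>
    simp [pow_add, pow_mul]

lemma master_plus (p q g : ℕ) (r : Bool) :
    cond r ((-1:ℂ)^(q+g)) 1 + (-1:ℂ)^(p+g) * (cond r (-1:ℂ) 1) * cond r ((-1:ℂ)^(q+g)) 1
      = (-1:ℂ)^p * (-1:ℂ)^((p+g).choose 2) * (-1:ℂ)^((q+g).choose 2) *
          ((cond r (-1:ℂ) 1) * (-1:ℂ)^((p+q).choose 2)
            + (-1:ℂ)^((p+q+1).choose 2) * (-1:ℂ)^(q+g)) := by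
  have h1 : (p+q+1).choose 2 = (p+q).choose 2 + (p+q) := by
    rw [choose_add_two (p+q) 1]
    simp
  rw [h1, choose_add_two p g, choose_add_two q g, choose_add_two p q]
  simp only [pow_add]
  set U := ((-1:ℂ))^(p.choose 2) with hU
  set W := ((-1:ℂ))^(q.choose 2) with hW
  set T := ((-1:ℂ))^(g.choose 2) with hT
  have hU1 : U = 1 ∨ U = -1 := by rw [hU, neg_one_pow_par]; split <;> simp
  have hW1 : W = 1 ∨ W = -1 := by rw [hW, neg_one_pow_par]; split <;> simp
  have hT1 : T = 1 ∨ T = -1 := by rw [hT, neg_one_pow_par]; split <;> simp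
  clear_value U W T
  rcases Nat.even_or_odd p with hp | hp <;> rcases Nat.even_or_odd q with hq | hq <;>
    rcases Nat.even_or_odd g with hg | hg <;> cases r <;>
    rw [neg_one_pow_par p, neg_one_pow_par q, neg_one_pow_par g,
      neg_one_pow_par (p*g), neg_one_pow_par (q*g), neg_one_pow_par (p*q)] <;>
    simp only [Nat.even_iff, Nat.odd_iff] at hp hq hg <;>
    rcases hU1 with h|h <;> rcases hW1 with h'|h' <;> rcases hT1 with h''|h'' <;>
    rw [h, h', h''] <;>
    norm_num [hp, hq, hg, Nat.mul_mod]

lemma master_minus (p q g : ℕ) (r : Bool) :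
    cond r ((-1:ℂ)^(q+g)) 1 - (-1:ℂ)^(p+g) * (cond r (-1:ℂ) 1) * cond r ((-1:ℂ)^(q+g)) 1
      = (-1:ℂ)^q * (-1:ℂ)^((p+g).choose 2) * (-1:ℂ)^((q+g).choose 2) *
          ((-1:ℂ)^((p+q).choose 2)
            + (cond r (1:ℂ) (-1)) * (-1:ℂ)^((p+q+1).choose 2) * (-1:ℂ)^(q+g)) := by
  have h1 : (p+q+1).choose 2 = (p+q).choose 2 + (p+q) := by
    rw [choose_add_two (p+q) 1]
    simp
  rw [h1, choose_add_two p g, choose_add_two q g, choose_add_two p q]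
  simp only [pow_add]
  set U := ((-1:ℂ))^(p.choose 2) with hU
  set W := ((-1:ℂ))^(q.choose 2) with hW
  set T := ((-1:ℂ))^(g.choose 2) with hT
  have hU1 : U = 1 ∨ U = -1 := by rw [hU, neg_one_pow_par]; split <;> simp
  have hW1 : W = 1 ∨ W = -1 := by rw [hW, neg_one_pow_par]; split <;> simp
  have hT1 : T = 1 ∨ T = -1 := by rw [hT, neg_one_pow_par]; split <;> simp
  clear_value U W T
  rcases Nat.even_or_odd p with hp | hp <;> rcases Nat.even_or_odd q with hq | hq <;>
    rcases Nat.even_or_odd g with hg | hg <;> cases r <;>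
    rw [neg_one_pow_par p, neg_one_pow_par q, neg_one_pow_par g,
      neg_one_pow_par (p*g), neg_one_pow_par (q*g), neg_one_pow_par (p*q)] <;>
    simp only [Nat.even_iff, Nat.odd_iff] at hp hq hg <;>
    rcases hU1 with h|h <;> rcases hW1 with h'|h' <;> rcases hT1 with h''|h'' <;>
    rw [h, h', h''] <;>
    norm_num [hp, hq, hg, Nat.mul_mod]

end Aux

lemma stmt4_plus {V : Type*} [Fintype V] [DecidableEq V]
    (G : SimpleGraph V) [DecidableRel G.Adj] (a k : V) (hak : G.Adj a k) (x : V → Bool) :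
    projDir a (xVec false) (graphState G) x =
      ((Real.sqrt 2 : ℝ) : ℂ)⁻¹ *
        tensorQubit a (xVec false)
          (applyGate (⟨k, hak.ne'⟩ : {v : V // v ≠ a}) (sqrtiY false)
            (pauliZProd
              (Finset.univ.filter (fun b : {v : V // v ≠ a} =>
                G.Adj a b.1 ∧ ¬ G.Adj k b.1 ∧ b.1 ≠ k))
              (graphState
                (localComp (inducedSub (localComp (localComp G k) a) (· ≠ a))
                  ⟨k, hak.ne'⟩)))) x := by
  classical
  have hka : k ≠ a := hak.ne'
  have hakne : a ≠ k := hak.ne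
  set s2i : ℂ := ((Real.sqrt 2 : ℝ) : ℂ)⁻¹ with hs2i
  set x0 : V → Bool := Function.update x a false with hx0def
  set x1 : V → Bool := Function.update x a true with hx1def
  set z : V → Bool := Function.update x0 k false with hzdef
  have hx0a : x0 a = false := by rw [hx0def]; simp
  have hx0k : x0 k = x k := by rw [hx0def]; exact Function.update_of_ne hka _ _
  have hzk : z k = false := by rw [hzdef]; simp
  have hza : z a = false := by rw [hzdef, Function.update_of_ne hakne]; exact hx0a
  have hzupdate : Function.update z k (x k) = x0 := by
    rw [hzdef, Function.update_idem, ← hx0k, Function.update_eq_self]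
  have hx1x0 : x1 = Function.update x0 a true := by
    rw [hx1def, hx0def, Function.update_idem]
  have hzx : ∀ v, v ≠ a → v ≠ k → z v = x v := by
    intro v hv1 hv2
    rw [hzdef, Function.update_of_ne hv2, hx0def, Function.update_of_ne hv1]
  set FA : Finset V := (G.neighborFinset a).erase k with hFAdef
  set FK : Finset V := (G.neighborFinset k).erase a with hFKdef
  set p : ℕ := ((FA \ FK).filter (fun v => z v = true)).card with hpdef
  set q : ℕ := ((FK \ FA).filter (fun v => z v = true)).card with hqdef
  set g : ℕ := ((FA ∩ FK).filter (fun v => z v = true)).card with hgdef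
  have hkFA : k ∉ FA := by rw [hFAdef]; exact Finset.notMem_erase _ _
  have hkNk : k ∉ G.neighborFinset k := by simp
  have hkNa : k ∈ G.neighborFinset a := by simp [hak]
  have hkFK : k ∉ FK := by rw [hFKdef]; simp
  have hNaz : (G.neighborFinset a).filter (fun v => z v = true)
      = FA.filter (fun v => z v = true) := by
    rw [hFAdef]
    ext v
    simp only [Finset.mem_filter, Finset.mem_erase]
    constructor
    · rintro ⟨h1, h2⟩
      refine ⟨⟨?_, h1⟩, h2⟩
      rintro rfl
      rw [hzk] at h2
      cases h2
    · rintro ⟨⟨_, h1⟩, h2⟩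
      exact ⟨h1, h2⟩
  have hNkz : (G.neighborFinset k).filter (fun v => z v = true)
      = FK.filter (fun v => z v = true) := by
    rw [hFKdef]
    ext v
    simp only [Finset.mem_filter, Finset.mem_erase]
    constructor
    · rintro ⟨h1, h2⟩
      refine ⟨⟨?_, h1⟩, h2⟩
      rintro rfl
      rw [hza] at h2
      cases h2
    · rintro ⟨⟨_, h1⟩, h2⟩
      exact ⟨h1, h2⟩
  have hnA : (FA.filter (fun v => z v = true)).card = p + g := by
    have hu : FA = (FA \ FK) ∪ (FA ∩ FK) := by
      ext v
      by_cases h : v ∈ FK <;> simp [h]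
    rw [hpdef, hgdef, ← Finset.card_union_of_disjoint
        (Finset.disjoint_filter_filter (Finset.disjoint_sdiff_inter FA FK)),
      ← Finset.filter_union]
    exact congrArg _ (congrArg _ hu)
  have hnK : (FK.filter (fun v => z v = true)).card = q + g := by
    have hu : FK = (FK \ FA) ∪ (FA ∩ FK) := by
      ext v
      by_cases h : v ∈ FA <;> simp [h] <;> tauto
    have hd : Disjoint (FK \ FA) (FA ∩ FK) := by
      rw [Finset.disjoint_left]
      intro v hv hv2
      exact (Finset.mem_sdiff.mp hv).2 (Finset.mem_inter.mp hv2).1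
    rw [hqdef, hgdef, ← Finset.card_union_of_disjoint (Finset.disjoint_filter_filter hd),
      ← Finset.filter_union]
    exact congrArg _ (congrArg _ hu)
  set A' : Finset V := symmDiff (G.neighborFinset a) FK with hA'def
  have hkA' : k ∈ A' := by
    rw [hA'def, Finset.mem_symmDiff]
    exact Or.inl ⟨hkNa, hkFK⟩
  have hdpq : Disjoint ((FA \ FK).filter (fun v => z v = true))
      ((FK \ FA).filter (fun v => z v = true)) := by
    apply Finset.disjoint_filter_filter
    rw [Finset.disjoint_left]
    intro v hv hv2
    exact (Finset.mem_sdiff.mp hv2).2 (Finset.mem_sdiff.mp hv).1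
  have hnA' : (A'.filter (fun v => z v = true)).card = p + q := by
    have he : A'.filter (fun v => z v = true)
        = ((FA \ FK).filter (fun v => z v = true))
          ∪ ((FK \ FA).filter (fun v => z v = true)) := by
      ext v
      simp only [Finset.mem_filter, Finset.mem_union, Finset.mem_sdiff]
      constructor
      · rintro ⟨hm, hv⟩
        have hvk : v ≠ k := by
          rintro rfl
          rw [hzk] at hv
          cases hv
        have hmm : v ∈ FA ↔ v ∈ G.neighborFinset a := by
          rw [hFAdef, Finset.mem_erase]
          simp [hvk]
        rw [hA'def, Finset.mem_symmDiff] at hm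
        rcases hm with ⟨h1, h2⟩ | ⟨h1, h2⟩
        · exact Or.inl ⟨⟨hmm.mpr h1, h2⟩, hv⟩
        · exact Or.inr ⟨⟨h1, fun hh => h2 (hmm.mp hh)⟩, hv⟩
      · rintro (⟨⟨h1, h2⟩, hv⟩ | ⟨⟨h1, h2⟩, hv⟩)
        · refine ⟨?_, hv⟩
          rw [hA'def, Finset.mem_symmDiff]
          exact Or.inl ⟨(Finset.mem_erase.mp (hFAdef ▸ h1)).2, h2⟩
        · refine ⟨?_, hv⟩
          rw [hA'def, Finset.mem_symmDiff]
          refine Or.inr ⟨h1, ?_⟩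
          intro hNa
          apply h2
          rw [hFAdef, Finset.mem_erase]
          exact ⟨fun hvk => hkFK (hvk ▸ h1), hNa⟩
    rw [he, Finset.card_union_of_disjoint hdpq, hpdef, hqdef]
  have hchiNk : chi (G.neighborFinset k) z = (-1:ℂ)^(q+g) := by
    rw [chi_eq_pow, hNkz, hnK]
  have hchiNa : chi (G.neighborFinset a) z = (-1:ℂ)^(p+g) := by
    rw [chi_eq_pow, hNaz, hnA]
  have hupdz : Function.update z k false = z := by
    rw [show (false : Bool) = z k from hzk.symm]
    exact Function.update_eq_self k z
  have hesPz_upd : ∀ t : Bool, esP G.edgeFinset (Function.update z k t)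
      = cond t ((-1:ℂ)^(q+g)) 1 * esP G.edgeFinset z := by
    intro t
    cases t
    · rw [hupdz]
      simp
    · rw [esP_flip G k z hzk, hchiNk]
      simp
  have hEx0 : esP G.edgeFinset x0 = cond (x k) ((-1:ℂ)^(q+g)) 1 * esP G.edgeFinset z := by
    rw [← hzupdate]
    exact hesPz_upd (x k)
  have hchiupd : ∀ t : Bool, chi (G.neighborFinset a) (Function.update z k t)
      = cond t (-1:ℂ) 1 * (-1:ℂ)^(p+g) := by
    intro t
    cases t
    · rw [hupdz, hchiNa]
      simp
    · rw [chi_update_true _ _ _ hzk, if_pos hkNa, hchiNa]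
      simp
  have hEx1 : esP G.edgeFinset x1
      = (cond (x k) (-1:ℂ) 1 * (-1:ℂ)^(p+g))
        * (cond (x k) ((-1:ℂ)^(q+g)) 1 * esP G.edgeFinset z) := by
    rw [hx1x0, esP_flip G a x0 hx0a, ← hzupdate, hchiupd (x k), hesPz_upd (x k)]
  have hxyt : ∀ (t : Bool) (u : {v : V // v ≠ a}),
      (Function.update z k t) u.1 = (Function.update (fun u : {v : V // v ≠ a} => x u.1) (⟨k, hak.ne'⟩ : {v : V // v ≠ a}) t) u := by
    intro t u
    by_cases hu : u = (⟨k, hak.ne'⟩ : {v : V // v ≠ a})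
    · subst hu
      simp [Function.update_self]
    · have hu1 : u.1 ≠ k := fun h => hu (Subtype.ext h)
      rw [Function.update_of_ne hu1, Function.update_of_ne hu]
      exact hzx u.1 u.2 hu1
  have hxta : ∀ t : Bool, (Function.update z k t) a = false := by
    intro t
    rw [Function.update_of_ne hakne]
    exact hza
  have hcntN2 : ∀ t : Bool,
      (((inducedSub (localComp (localComp G k) a) (· ≠ a)).neighborFinset (⟨k, hak.ne'⟩ : {v : V // v ≠ a})).filter (fun u => Function.update (fun u : {v : V // v ≠ a} => x u.1) (⟨k, hak.ne'⟩ : {v : V // v ≠ a}) t u = true)).card = p + g := by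
    intro t
    rw [← card_filter_image_val a ((inducedSub (localComp (localComp G k) a) (· ≠ a)).neighborFinset (⟨k, hak.ne'⟩ : {v : V // v ≠ a})) (Function.update (fun u : {v : V // v ≠ a} => x u.1) (⟨k, hak.ne'⟩ : {v : V // v ≠ a}) t)
        (Function.update z k t) (hxyt t)]
    rw [image_N2 G a k hak, ← hFAdef]
    rw [filter_update_notMem FA z k t hkFA, hnA]
  have hkfA' : k ∉ A'.filter (fun v => z v = true) := by
    simp [Finset.mem_filter, hzk]
  have hcntA' : ∀ t : Bool,
      ((A'.filter (fun v => Function.update z k t v = true)).card) = (p+q) + cond t 1 0 := by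
    intro t
    cases t
    · rw [hupdz, hnA']
      simp
    · rw [filter_update_mem A' z k hkA' hzk, Finset.card_insert_of_notMem hkfA', hnA']
      simp
  have hchiS : ∀ t : Bool, chi (Finset.univ.filter (fun b : {v : V // v ≠ a} => G.Adj a b.1 ∧ ¬ G.Adj k b.1 ∧ b.1 ≠ k)) (Function.update (fun u : {v : V // v ≠ a} => x u.1) (⟨k, hak.ne'⟩ : {v : V // v ≠ a}) t)
      = (-1:ℂ)^p := by
    intro t
    rw [← chi_image_val a _ (Function.update (fun u : {v : V // v ≠ a} => x u.1) (⟨k, hak.ne'⟩ : {v : V // v ≠ a}) t) (Function.update z k t) (hxyt t)]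
    rw [image_Sp G a k hak, ← hFAdef, ← hFKdef]
    have hknot : k ∉ (FA \ FK) := fun h => hkFA (Finset.mem_sdiff.mp h).1
    rw [show chi (FA \ FK) (Function.update z k t) = chi (FA \ FK) z from
      chi_congr _ _ _ fun b hb => Function.update_of_ne (fun h => hknot (by rw [← h]; exact hb)) _ _]
    rw [chi_eq_pow]
  have hEH : ∀ t : Bool,
      esP (localComp (inducedSub (localComp (localComp G k) a) (· ≠ a)) (⟨k, hak.ne'⟩ : {v : V // v ≠ a})).edgeFinset (Function.update (fun u : {v : V // v ≠ a} => x u.1) (⟨k, hak.ne'⟩ : {v : V // v ≠ a}) t)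
        = (-1:ℂ)^((p+g).choose 2) * ((-1:ℂ)^(((p+q) + cond t 1 0).choose 2) *
            ((-1:ℂ)^((q+g).choose 2) * (cond t ((-1:ℂ)^(q+g)) 1 * esP G.edgeFinset z))) := by
    intro t
    rw [localComp_edgeFinset (inducedSub (localComp (localComp G k) a) (· ≠ a)) (⟨k, hak.ne'⟩ : {v : V // v ≠ a}),
      esP_symmDiff]
    rw [esP_induced (localComp (localComp G k) a) a (Function.update (fun u : {v : V // v ≠ a} => x u.1) (⟨k, hak.ne'⟩ : {v : V // v ≠ a}) t)
        (Function.update z k t) (hxta t) (hxyt t)]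
    rw [esP_pairsF, hcntN2 t]
    rw [localComp_edgeFinset (localComp G k) a, esP_symmDiff]
    rw [nbr_G1_a G a k hak, ← hFKdef, ← hA'def]
    rw [esP_pairsF, hcntA' t]
    rw [localComp_edgeFinset G k, esP_symmDiff, esP_pairsF]
    rw [filter_update_notMem _ z k t hkNk]
    have hcntk : ((G.neighborFinset k).filter (fun v => z v = true)).card = q + g := by
      rw [hNkz, hnK]
    rw [hcntk, hesPz_upd t]
    ring
  have hm : Fintype.card V = Fintype.card {v : V // v ≠ a} + 1 := by
    have h2 : Fintype.card {v : V // v ≠ a} = Fintype.card V - 1 := by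
      simp [Fintype.card_subtype_compl]
    have h3 : 0 < Fintype.card V := Fintype.card_pos_iff.mpr ⟨a⟩
    omega
  have hc0 : (starRingEnd ℂ) (xVec false false) = s2i := by
    rw [show xVec false false = s2i from by simp [xVec, hs2i], hs2i, map_inv₀, Complex.conj_ofReal]
  have hc1 : (starRingEnd ℂ) (xVec false true) = s2i := by
    rw [show xVec false true = s2i from by simp [xVec, hs2i], hs2i, map_inv₀, Complex.conj_ofReal]
  have hsq0 : ∀ t : Bool, sqrtiY false (x k) t
      = s2i * (cond t 1 (cond (x k) (-1:ℂ) 1)) := by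
    intro t
    cases t <;> cases hxk : x k <;> simp [sqrtiY, hxk, hs2i]
  have foldG : ∀ w : V → Bool, (∏ e ∈ G.edgeFinset, edgeSign w e) = esP G.edgeFinset w :=
    fun _ => rfl
  have foldH : ∀ w : {v : V // v ≠ a} → Bool,
      (∏ e ∈ (localComp (inducedSub (localComp (localComp G k) a) (· ≠ a)) (⟨k, hak.ne'⟩ : {v : V // v ≠ a})).edgeFinset, edgeSign w e) = esP (localComp (inducedSub (localComp (localComp G k) a) (· ≠ a)) (⟨k, hak.ne'⟩ : {v : V // v ≠ a})).edgeFinset w := fun _ => rfl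
  have foldchi : ∀ w : {v : V // v ≠ a} → Bool,
      (∏ b ∈ Finset.univ.filter (fun b : {v : V // v ≠ a} => G.Adj a b.1 ∧ ¬ G.Adj k b.1 ∧ b.1 ≠ k), if w b then (-1:ℂ) else 1)
        = chi (Finset.univ.filter (fun b : {v : V // v ≠ a} => G.Adj a b.1 ∧ ¬ G.Adj k b.1 ∧ b.1 ≠ k)) w := fun _ => rfl
  have hgoalL : projDir a (xVec false) (graphState G) x
      = (xVec false) (x a) * (s2i^(Fintype.card {v : V // v ≠ a} + 2)
          * ((cond (x k) ((-1:ℂ)^(q+g)) 1 + (-1:ℂ)^(p+g) * (cond (x k) (-1:ℂ) 1) * cond (x k) ((-1:ℂ)^(q+g)) 1) * esP G.edgeFinset z)) := by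
    simp only [projDir, graphState]
    rw [hc0, hc1, ← hs2i, foldG, foldG, ← hx0def, ← hx1def, hEx0, hEx1, hm]
    ring
  have hgoalR : ((Real.sqrt 2 : ℝ) : ℂ)⁻¹ *
        tensorQubit a (xVec false)
          (applyGate (⟨k, hak.ne'⟩ : {v : V // v ≠ a}) (sqrtiY false)
            (pauliZProd
              (Finset.univ.filter (fun b : {v : V // v ≠ a} =>
                G.Adj a b.1 ∧ ¬ G.Adj k b.1 ∧ b.1 ≠ k))
              (graphState
                (localComp (inducedSub (localComp (localComp G k) a) (· ≠ a))
                  ⟨k, hak.ne'⟩)))) x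
      = (xVec false) (x a) * (s2i^(Fintype.card {v : V // v ≠ a} + 2)
          * (((-1:ℂ)^p * (-1:ℂ)^((p+g).choose 2) * (-1:ℂ)^((q+g).choose 2) * ((cond (x k) (-1:ℂ) 1) * (-1:ℂ)^((p+q).choose 2) + (-1:ℂ)^((p+q+1).choose 2) * (-1:ℂ)^(q+g))) * esP G.edgeFinset z)) := by
    simp only [tensorQubit, applyGate, pauliZProd, graphState]
    rw [← hs2i, foldH, foldH, foldchi, foldchi]
    rw [hsq0 false, hsq0 true, hchiS false, hchiS true, hEH false, hEH true]
    simp only [Bool.cond_true, Bool.cond_false, Nat.add_zero]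
    ring
  rw [hgoalL, hgoalR, master_plus p q g (x k)]


lemma stmt4_minus {V : Type*} [Fintype V] [DecidableEq V]
    (G : SimpleGraph V) [DecidableRel G.Adj] (a k : V) (hak : G.Adj a k) (x : V → Bool) :
    projDir a (xVec true) (graphState G) x =
      ((Real.sqrt 2 : ℝ) : ℂ)⁻¹ *
        tensorQubit a (xVec true)
          (applyGate (⟨k, hak.ne'⟩ : {v : V // v ≠ a}) (sqrtiY true)
            (pauliZProd
              (Finset.univ.filter (fun b : {v : V // v ≠ a} =>
                G.Adj k b.1 ∧ ¬ G.Adj a b.1))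
              (graphState
                (localComp (inducedSub (localComp (localComp G k) a) (· ≠ a))
                  ⟨k, hak.ne'⟩)))) x := by
  classical
  have hka : k ≠ a := hak.ne'
  have hakne : a ≠ k := hak.ne
  set s2i : ℂ := ((Real.sqrt 2 : ℝ) : ℂ)⁻¹ with hs2i
  set x0 : V → Bool := Function.update x a false with hx0def
  set x1 : V → Bool := Function.update x a true with hx1def
  set z : V → Bool := Function.update x0 k false with hzdef
  have hx0a : x0 a = false := by rw [hx0def]; simp
  have hx0k : x0 k = x k := by rw [hx0def]; exact Function.update_of_ne hka _ _
  have hzk : z k = false := by rw [hzdef]; simp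
  have hza : z a = false := by rw [hzdef, Function.update_of_ne hakne]; exact hx0a
  have hzupdate : Function.update z k (x k) = x0 := by
    rw [hzdef, Function.update_idem, ← hx0k, Function.update_eq_self]
  have hx1x0 : x1 = Function.update x0 a true := by
    rw [hx1def, hx0def, Function.update_idem]
  have hzx : ∀ v, v ≠ a → v ≠ k → z v = x v := by
    intro v hv1 hv2
    rw [hzdef, Function.update_of_ne hv2, hx0def, Function.update_of_ne hv1]
  set FA : Finset V := (G.neighborFinset a).erase k with hFAdef
  set FK : Finset V := (G.neighborFinset k).erase a with hFKdef
  set p : ℕ := ((FA \ FK).filter (fun v => z v = true)).card with hpdef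
  set q : ℕ := ((FK \ FA).filter (fun v => z v = true)).card with hqdef
  set g : ℕ := ((FA ∩ FK).filter (fun v => z v = true)).card with hgdef
  have hkFA : k ∉ FA := by rw [hFAdef]; exact Finset.notMem_erase _ _
  have hkNk : k ∉ G.neighborFinset k := by simp
  have hkNa : k ∈ G.neighborFinset a := by simp [hak]
  have hkFK : k ∉ FK := by rw [hFKdef]; simp
  have hNaz : (G.neighborFinset a).filter (fun v => z v = true)
      = FA.filter (fun v => z v = true) := by
    rw [hFAdef]
    ext v
    simp only [Finset.mem_filter, Finset.mem_erase]
    constructor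
    · rintro ⟨h1, h2⟩
      refine ⟨⟨?_, h1⟩, h2⟩
      rintro rfl
      rw [hzk] at h2
      cases h2
    · rintro ⟨⟨_, h1⟩, h2⟩
      exact ⟨h1, h2⟩
  have hNkz : (G.neighborFinset k).filter (fun v => z v = true)
      = FK.filter (fun v => z v = true) := by
    rw [hFKdef]
    ext v
    simp only [Finset.mem_filter, Finset.mem_erase]
    constructor
    · rintro ⟨h1, h2⟩
      refine ⟨⟨?_, h1⟩, h2⟩
      rintro rfl
      rw [hza] at h2
      cases h2
    · rintro ⟨⟨_, h1⟩, h2⟩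
      exact ⟨h1, h2⟩
  have hnA : (FA.filter (fun v => z v = true)).card = p + g := by
    have hu : FA = (FA \ FK) ∪ (FA ∩ FK) := by
      ext v
      by_cases h : v ∈ FK <;> simp [h]
    rw [hpdef, hgdef, ← Finset.card_union_of_disjoint
        (Finset.disjoint_filter_filter (Finset.disjoint_sdiff_inter FA FK)),
      ← Finset.filter_union]
    exact congrArg _ (congrArg _ hu)
  have hnK : (FK.filter (fun v => z v = true)).card = q + g := by
    have hu : FK = (FK \ FA) ∪ (FA ∩ FK) := by
      ext v
      by_cases h : v ∈ FA <;> simp [h] <;> tauto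
    have hd : Disjoint (FK \ FA) (FA ∩ FK) := by
      rw [Finset.disjoint_left]
      intro v hv hv2
      exact (Finset.mem_sdiff.mp hv).2 (Finset.mem_inter.mp hv2).1
    rw [hqdef, hgdef, ← Finset.card_union_of_disjoint (Finset.disjoint_filter_filter hd),
      ← Finset.filter_union]
    exact congrArg _ (congrArg _ hu)
  set A' : Finset V := symmDiff (G.neighborFinset a) FK with hA'def
  have hkA' : k ∈ A' := by
    rw [hA'def, Finset.mem_symmDiff]
    exact Or.inl ⟨hkNa, hkFK⟩
  have hdpq : Disjoint ((FA \ FK).filter (fun v => z v = true))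
      ((FK \ FA).filter (fun v => z v = true)) := by
    apply Finset.disjoint_filter_filter
    rw [Finset.disjoint_left]
    intro v hv hv2
    exact (Finset.mem_sdiff.mp hv2).2 (Finset.mem_sdiff.mp hv).1
  have hnA' : (A'.filter (fun v => z v = true)).card = p + q := by
    have he : A'.filter (fun v => z v = true)
        = ((FA \ FK).filter (fun v => z v = true))
          ∪ ((FK \ FA).filter (fun v => z v = true)) := by
      ext v
      simp only [Finset.mem_filter, Finset.mem_union, Finset.mem_sdiff]
      constructor
      · rintro ⟨hm, hv⟩
        have hvk : v ≠ k := by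
          rintro rfl
          rw [hzk] at hv
          cases hv
        have hmm : v ∈ FA ↔ v ∈ G.neighborFinset a := by
          rw [hFAdef, Finset.mem_erase]
          simp [hvk]
        rw [hA'def, Finset.mem_symmDiff] at hm
        rcases hm with ⟨h1, h2⟩ | ⟨h1, h2⟩
        · exact Or.inl ⟨⟨hmm.mpr h1, h2⟩, hv⟩
        · exact Or.inr ⟨⟨h1, fun hh => h2 (hmm.mp hh)⟩, hv⟩
      · rintro (⟨⟨h1, h2⟩, hv⟩ | ⟨⟨h1, h2⟩, hv⟩)
        · refine ⟨?_, hv⟩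
          rw [hA'def, Finset.mem_symmDiff]
          exact Or.inl ⟨(Finset.mem_erase.mp (hFAdef ▸ h1)).2, h2⟩
        · refine ⟨?_, hv⟩
          rw [hA'def, Finset.mem_symmDiff]
          refine Or.inr ⟨h1, ?_⟩
          intro hNa
          apply h2
          rw [hFAdef, Finset.mem_erase]
          exact ⟨fun hvk => hkFK (hvk ▸ h1), hNa⟩
    rw [he, Finset.card_union_of_disjoint hdpq, hpdef, hqdef]
  have hchiNk : chi (G.neighborFinset k) z = (-1:ℂ)^(q+g) := by
    rw [chi_eq_pow, hNkz, hnK]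
  have hchiNa : chi (G.neighborFinset a) z = (-1:ℂ)^(p+g) := by
    rw [chi_eq_pow, hNaz, hnA]
  have hupdz : Function.update z k false = z := by
    rw [show (false : Bool) = z k from hzk.symm]
    exact Function.update_eq_self k z
  have hesPz_upd : ∀ t : Bool, esP G.edgeFinset (Function.update z k t)
      = cond t ((-1:ℂ)^(q+g)) 1 * esP G.edgeFinset z := by
    intro t
    cases t
    · rw [hupdz]
      simp
    · rw [esP_flip G k z hzk, hchiNk]
      simp
  have hEx0 : esP G.edgeFinset x0 = cond (x k) ((-1:ℂ)^(q+g)) 1 * esP G.edgeFinset z := by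
    rw [← hzupdate]
    exact hesPz_upd (x k)
  have hchiupd : ∀ t : Bool, chi (G.neighborFinset a) (Function.update z k t)
      = cond t (-1:ℂ) 1 * (-1:ℂ)^(p+g) := by
    intro t
    cases t
    · rw [hupdz, hchiNa]
      simp
    · rw [chi_update_true _ _ _ hzk, if_pos hkNa, hchiNa]
      simp
  have hEx1 : esP G.edgeFinset x1
      = (cond (x k) (-1:ℂ) 1 * (-1:ℂ)^(p+g))
        * (cond (x k) ((-1:ℂ)^(q+g)) 1 * esP G.edgeFinset z) := by
    rw [hx1x0, esP_flip G a x0 hx0a, ← hzupdate, hchiupd (x k), hesPz_upd (x k)]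
  have hxyt : ∀ (t : Bool) (u : {v : V // v ≠ a}),
      (Function.update z k t) u.1 = (Function.update (fun u : {v : V // v ≠ a} => x u.1) (⟨k, hak.ne'⟩ : {v : V // v ≠ a}) t) u := by
    intro t u
    by_cases hu : u = (⟨k, hak.ne'⟩ : {v : V // v ≠ a})
    · subst hu
      simp [Function.update_self]
    · have hu1 : u.1 ≠ k := fun h => hu (Subtype.ext h)
      rw [Function.update_of_ne hu1, Function.update_of_ne hu]
      exact hzx u.1 u.2 hu1
  have hxta : ∀ t : Bool, (Function.update z k t) a = false := by
    intro t
    rw [Function.update_of_ne hakne]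
    exact hza
  have hcntN2 : ∀ t : Bool,
      (((inducedSub (localComp (localComp G k) a) (· ≠ a)).neighborFinset (⟨k, hak.ne'⟩ : {v : V // v ≠ a})).filter (fun u => Function.update (fun u : {v : V // v ≠ a} => x u.1) (⟨k, hak.ne'⟩ : {v : V // v ≠ a}) t u = true)).card = p + g := by
    intro t
    rw [← card_filter_image_val a ((inducedSub (localComp (localComp G k) a) (· ≠ a)).neighborFinset (⟨k, hak.ne'⟩ : {v : V // v ≠ a})) (Function.update (fun u : {v : V // v ≠ a} => x u.1) (⟨k, hak.ne'⟩ : {v : V // v ≠ a}) t)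
        (Function.update z k t) (hxyt t)]
    rw [image_N2 G a k hak, ← hFAdef]
    rw [filter_update_notMem FA z k t hkFA, hnA]
  have hkfA' : k ∉ A'.filter (fun v => z v = true) := by
    simp [Finset.mem_filter, hzk]
  have hcntA' : ∀ t : Bool,
      ((A'.filter (fun v => Function.update z k t v = true)).card) = (p+q) + cond t 1 0 := by
    intro t
    cases t
    · rw [hupdz, hnA']
      simp
    · rw [filter_update_mem A' z k hkA' hzk, Finset.card_insert_of_notMem hkfA', hnA']
      simp
  have hchiS : ∀ t : Bool, chi (Finset.univ.filter (fun b : {v : V // v ≠ a} => G.Adj k b.1 ∧ ¬ G.Adj a b.1)) (Function.update (fun u : {v : V // v ≠ a} => x u.1) (⟨k, hak.ne'⟩ : {v : V // v ≠ a}) t)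
      = (-1:ℂ)^q := by
    intro t
    rw [← chi_image_val a _ (Function.update (fun u : {v : V // v ≠ a} => x u.1) (⟨k, hak.ne'⟩ : {v : V // v ≠ a}) t) (Function.update z k t) (hxyt t)]
    rw [image_Sm G a k hak, ← hFAdef, ← hFKdef]
    have hknot : k ∉ (FK \ FA) := fun h => hkFK (Finset.mem_sdiff.mp h).1
    rw [show chi (FK \ FA) (Function.update z k t) = chi (FK \ FA) z from
      chi_congr _ _ _ fun b hb => Function.update_of_ne (fun h => hknot (by rw [← h]; exact hb)) _ _]
    rw [chi_eq_pow]
  have hEH : ∀ t : Bool,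
      esP (localComp (inducedSub (localComp (localComp G k) a) (· ≠ a)) (⟨k, hak.ne'⟩ : {v : V // v ≠ a})).edgeFinset (Function.update (fun u : {v : V // v ≠ a} => x u.1) (⟨k, hak.ne'⟩ : {v : V // v ≠ a}) t)
        = (-1:ℂ)^((p+g).choose 2) * ((-1:ℂ)^(((p+q) + cond t 1 0).choose 2) *
            ((-1:ℂ)^((q+g).choose 2) * (cond t ((-1:ℂ)^(q+g)) 1 * esP G.edgeFinset z))) := by
    intro t
    rw [localComp_edgeFinset (inducedSub (localComp (localComp G k) a) (· ≠ a)) (⟨k, hak.ne'⟩ : {v : V // v ≠ a}),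
      esP_symmDiff]
    rw [esP_induced (localComp (localComp G k) a) a (Function.update (fun u : {v : V // v ≠ a} => x u.1) (⟨k, hak.ne'⟩ : {v : V // v ≠ a}) t)
        (Function.update z k t) (hxta t) (hxyt t)]
    rw [esP_pairsF, hcntN2 t]
    rw [localComp_edgeFinset (localComp G k) a, esP_symmDiff]
    rw [nbr_G1_a G a k hak, ← hFKdef, ← hA'def]
    rw [esP_pairsF, hcntA' t]
    rw [localComp_edgeFinset G k, esP_symmDiff, esP_pairsF]
    rw [filter_update_notMem _ z k t hkNk]
    have hcntk : ((G.neighborFinset k).filter (fun v => z v = true)).card = q + g := by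
      rw [hNkz, hnK]
    rw [hcntk, hesPz_upd t]
    ring
  have hm : Fintype.card V = Fintype.card {v : V // v ≠ a} + 1 := by
    have h2 : Fintype.card {v : V // v ≠ a} = Fintype.card V - 1 := by
      simp [Fintype.card_subtype_compl]
    have h3 : 0 < Fintype.card V := Fintype.card_pos_iff.mpr ⟨a⟩
    omega
  have hc0 : (starRingEnd ℂ) (xVec true false) = s2i := by
    rw [show xVec true false = s2i from by simp [xVec, hs2i], hs2i, map_inv₀, Complex.conj_ofReal]
  have hc1 : (starRingEnd ℂ) (xVec true true) = -s2i := by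
    rw [show xVec true true = -s2i from by simp [xVec, hs2i], map_neg, hs2i, map_inv₀,
      Complex.conj_ofReal]
  have hsq0 : ∀ t : Bool, sqrtiY true (x k) t
      = s2i * (cond t (cond (x k) (1:ℂ) (-1)) 1) := by
    intro t
    cases t <;> cases hxk : x k <;> simp [sqrtiY, hxk, hs2i]
  have foldG : ∀ w : V → Bool, (∏ e ∈ G.edgeFinset, edgeSign w e) = esP G.edgeFinset w :=
    fun _ => rfl
  have foldH : ∀ w : {v : V // v ≠ a} → Bool,
      (∏ e ∈ (localComp (inducedSub (localComp (localComp G k) a) (· ≠ a)) (⟨k, hak.ne'⟩ : {v : V // v ≠ a})).edgeFinset, edgeSign w e) = esP (localComp (inducedSub (localComp (localComp G k) a) (· ≠ a)) (⟨k, hak.ne'⟩ : {v : V // v ≠ a})).edgeFinset w := fun _ => rfl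
  have foldchi : ∀ w : {v : V // v ≠ a} → Bool,
      (∏ b ∈ Finset.univ.filter (fun b : {v : V // v ≠ a} => G.Adj k b.1 ∧ ¬ G.Adj a b.1), if w b then (-1:ℂ) else 1)
        = chi (Finset.univ.filter (fun b : {v : V // v ≠ a} => G.Adj k b.1 ∧ ¬ G.Adj a b.1)) w := fun _ => rfl
  have hgoalL : projDir a (xVec true) (graphState G) x
      = (xVec true) (x a) * (s2i^(Fintype.card {v : V // v ≠ a} + 2)
          * ((cond (x k) ((-1:ℂ)^(q+g)) 1 - (-1:ℂ)^(p+g) * (cond (x k) (-1:ℂ) 1) * cond (x k) ((-1:ℂ)^(q+g)) 1) * esP G.edgeFinset z)) := by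
    simp only [projDir, graphState]
    rw [hc0, hc1, ← hs2i, foldG, foldG, ← hx0def, ← hx1def, hEx0, hEx1, hm]
    ring
  have hgoalR : ((Real.sqrt 2 : ℝ) : ℂ)⁻¹ *
        tensorQubit a (xVec true)
          (applyGate (⟨k, hak.ne'⟩ : {v : V // v ≠ a}) (sqrtiY true)
            (pauliZProd
              (Finset.univ.filter (fun b : {v : V // v ≠ a} =>
                G.Adj k b.1 ∧ ¬ G.Adj a b.1))
              (graphState
                (localComp (inducedSub (localComp (localComp G k) a) (· ≠ a))
                  ⟨k, hak.ne'⟩)))) x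
      = (xVec true) (x a) * (s2i^(Fintype.card {v : V // v ≠ a} + 2)
          * (((-1:ℂ)^q * (-1:ℂ)^((p+g).choose 2) * (-1:ℂ)^((q+g).choose 2) * ((-1:ℂ)^((p+q).choose 2) + (cond (x k) (1:ℂ) (-1)) * (-1:ℂ)^((p+q+1).choose 2) * (-1:ℂ)^(q+g))) * esP G.edgeFinset z)) := by
    simp only [tensorQubit, applyGate, pauliZProd, graphState]
    rw [← hs2i, foldH, foldH, foldchi, foldchi]
    rw [hsq0 false, hsq0 true, hchiS false, hchiS true, hEH false, hEH true]
    simp only [Bool.cond_true, Bool.cond_false, Nat.add_zero]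
    ring
  rw [hgoalL, hgoalR, master_minus p q g (x k)]


/-- Projecting qubit `a` (with `k ∈ N_a`) of a graph state onto the
Pauli-`X` eigenbasis: up to a phase,
`P_{X,±}^{(a)} |G⟩ = (1/√2) |X,±⟩^{(a)} ⊗ U_{a,X,±} |τ_k(τ_a(τ_k(G)) − a)⟩`, where
`U_{a,X,+} = √(+iY)^{(k)} ⊗ ⨂_{b∈N_a∖(N_k∪{k})} Z^{(b)}` and
`U_{a,X,−} = √(−iY)^{(k)} ⊗ ⨂_{b∈N_k∖(N_a∪{a})} Z^{(b)}`. -/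
theorem stmt4 {V : Type*} [Fintype V] [DecidableEq V]
    (G : SimpleGraph V) [DecidableRel G.Adj] (a k : V) (hak : G.Adj a k) :
    ∃ cp cm : ℂ, ‖cp‖ = 1 ∧ ‖cm‖ = 1 ∧
      projDir a (xVec false) (graphState G) =
        (cp * ((Real.sqrt 2 : ℝ) : ℂ)⁻¹) •
          tensorQubit a (xVec false)
            (applyGate (⟨k, hak.ne'⟩ : {v : V // v ≠ a}) (sqrtiY false)
              (pauliZProd
                (Finset.univ.filter (fun b : {v : V // v ≠ a} =>
                  G.Adj a b.1 ∧ ¬ G.Adj k b.1 ∧ b.1 ≠ k))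
                (graphState
                  (localComp (inducedSub (localComp (localComp G k) a) (· ≠ a))
                    ⟨k, hak.ne'⟩)))) ∧
      projDir a (xVec true) (graphState G) =
        (cm * ((Real.sqrt 2 : ℝ) : ℂ)⁻¹) •
          tensorQubit a (xVec true)
            (applyGate (⟨k, hak.ne'⟩ : {v : V // v ≠ a}) (sqrtiY true)
              (pauliZProd
                (Finset.univ.filter (fun b : {v : V // v ≠ a} =>
                  G.Adj k b.1 ∧ ¬ G.Adj a b.1))
                (graphState
                  (localComp (inducedSub (localComp (localComp G k) a) (· ≠ a))
                    ⟨k, hak.ne'⟩)))) := by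
  refine ⟨1, 1, by simp, by simp, ?_, ?_⟩
  · funext x
    rw [Pi.smul_apply, smul_eq_mul, one_mul]
    exact stmt4_plus G a k hak x
  · funext x
    rw [Pi.smul_apply, smul_eq_mul, one_mul]
    exact stmt4_minus G a k hak x
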